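/- For all x ∈ ℝ, t ≥ 0 and δ > 0, the second spatial derivative of the Burgers solution satisfies the pointwise bound |∂²_x w^r_δ(x,t)| ≤ (4/δ) · ∂_x w^r_δ(x,t). -/

import Mathlib

private lemma tanh_hasDerivAt (x : ℝ) :
    HasDerivAt Real.tanh (1 - Real.tanh x ^ 2) x := by
  have hc : Real.cosh x ≠ 0 := (Real.cosh_pos x).ne'
  have h := (Real.hasDerivAt_sinh x).div (Real.hasDerivAt_cosh x) hc
  have heq : Real.tanh = fun x => Real.sinh x / Real.cosh x :=
    funext fun x => Real.tanh_eq_sinh_div_cosh x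
  rw [heq]
  refine h.congr_deriv (Eq.symm ?_)
  show 1 - (Real.sinh x / Real.cosh x) ^ 2 =
    (Real.cosh x * Real.cosh x - Real.sinh x * Real.sinh x) / Real.cosh x ^ 2
  have h2 := Real.cosh_sq_sub_sinh_sq x
  field_simp

private lemma tanh_sq_lt_one (x : ℝ) : Real.tanh x ^ 2 < 1 := by
  rw [Real.tanh_eq_sinh_div_cosh]
  have hc : 0 < Real.cosh x := Real.cosh_pos x
  have h2 := Real.cosh_sq_sub_sinh_sq x
  rw [div_pow, div_lt_one (by positivity)]
  nlinarith

private lemma abs_tanh_le_one (x : ℝ) : |Real.tanh x| ≤ 1 := by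
  have h := tanh_sq_lt_one x
  nlinarith [sq_abs (Real.tanh x), abs_nonneg (Real.tanh x)]

/-- pointwise bound |∂²ₓ w^r_δ(x,t)| ≤ (4/δ) ∂ₓ w^r_δ(x,t)
for the Burgers solution with smoothed monotone data. -/
theorem burgers_second_derivative_pointwise_bound
    (wm wp δ : ℝ) (hw : wm < wp) (hδ : 0 < δ)
    (wδ : ℝ → ℝ)
    (hwδ : ∀ x, wδ x = (wp + wm) / 2 + (wp - wm) / 2 * Real.tanh (x / δ))
    (x₀ : ℝ → ℝ → ℝ)
    (hx₀ : ∀ x t : ℝ, 0 ≤ t → x₀ x t + wδ (x₀ x t) * t = x)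
    (w : ℝ → ℝ → ℝ)
    (hwsol : ∀ x t : ℝ, 0 ≤ t → w x t = wδ (x₀ x t)) :
    ∀ x t : ℝ, 0 ≤ t →
      |iteratedDeriv 2 (fun z => w z t) x| ≤ 4 / δ * deriv (fun z => w z t) x := by
  intro x t ht
  set c : ℝ := (wp - wm) / 2 with hcdef
  have hc0 : 0 < c := by rw [hcdef]; linarith
  set T : ℝ → ℝ := fun y => Real.tanh (y / δ) with hTdef
  -- derivative of T
  have hT' : ∀ y, HasDerivAt T ((1 - T y ^ 2) / δ) y := by
    intro y
    have h1 : HasDerivAt (fun y : ℝ => y / δ) (1 / δ) y := (hasDerivAt_id y).div_const δ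
    have h2 := (tanh_hasDerivAt (y / δ)).comp y h1
    refine h2.congr_deriv ?_
    show (1 - Real.tanh (y / δ) ^ 2) * (1 / δ) = (1 - Real.tanh (y / δ) ^ 2) / δ
    ring
  set D : ℝ → ℝ := fun y => c * ((1 - T y ^ 2) / δ) with hDdef
  -- derivative of wδ
  have hwδ' : ∀ y, HasDerivAt wδ (D y) y := by
    intro y
    have heq : wδ = fun y => (wp + wm) / 2 + c * T y := funext fun y => hwδ y
    rw [heq]
    exact ((hT' y).const_mul c).const_add _
  have hT1 : ∀ y, T y ^ 2 < 1 := fun y => tanh_sq_lt_one _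
  have hTabs : ∀ y, |T y| ≤ 1 := fun y => abs_tanh_le_one _
  have hDpos : ∀ y, 0 < D y := fun y =>
    mul_pos hc0 (div_pos (by linarith [hT1 y]) hδ)
  -- second derivative of wδ
  set D2 : ℝ → ℝ := fun y => -2 * c * T y * (1 - T y ^ 2) / δ ^ 2 with hD2def
  have hD' : ∀ y, HasDerivAt D (D2 y) y := by
    intro y
    have h1 := (hT' y).pow 2
    have h2 := (h1.const_sub 1).div_const δ
    have h3 := h2.const_mul c
    refine h3.congr_deriv (Eq.symm ?_)
    rw [hD2def]
    field_simp
    ring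
  -- bound |D2| ≤ (2/δ) D
  have hD2bound : ∀ y, |D2 y| ≤ 2 / δ * D y := by
    intro y
    have heq : D2 y = (2 / δ * D y) * (-(T y)) := by
      rw [hD2def, hDdef]; field_simp
    rw [heq, abs_mul, abs_neg]
    have h1 : 0 ≤ 2 / δ * D y := mul_nonneg (by positivity) (hDpos y).le
    calc |2 / δ * D y| * |T y| = (2 / δ * D y) * |T y| := by rw [abs_of_nonneg h1]
      _ ≤ (2 / δ * D y) * 1 := mul_le_mul_of_nonneg_left (hTabs y) h1
      _ = 2 / δ * D y := by ring
  -- the map h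
  set h : ℝ → ℝ := fun y => y + wδ y * t with hhdef
  have hh' : ∀ y, HasDerivAt h (1 + D y * t) y := fun y =>
    (hasDerivAt_id y).add ((hwδ' y).mul_const t)
  have hP : ∀ y, 0 < 1 + D y * t := fun y => by
    have := mul_nonneg (hDpos y).le ht; linarith
  have hmono : StrictMono h := strictMono_of_deriv_pos fun y => by
    rw [(hh' y).deriv]; exact hP y
  set X : ℝ → ℝ := fun z => x₀ z t with hXdef
  have hXinv : ∀ z, h (X z) = z := fun z => hx₀ z t ht
  have hsurj : Function.Surjective h := fun z => ⟨X z, hXinv z⟩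
  -- X is the inverse of h, hence continuous
  set e := StrictMono.orderIsoOfSurjective h hmono hsurj with hedef
  have hXeq : X = fun z => e.symm z := by
    funext z
    apply hmono.injective
    rw [hXinv z]
    exact (StrictMono.orderIsoOfSurjective_self_symm_apply h hmono hsurj z).symm
  have hXcont : Continuous X := by
    rw [hXeq]; exact OrderIso.continuous e.symm
  have hX' : ∀ z, HasDerivAt X (1 + D (X z) * t)⁻¹ z := fun z =>
    HasDerivAt.of_local_left_inverse hXcont.continuousAt (hh' (X z)) (hP (X z)).ne'
      (Filter.Eventually.of_forall hXinv)
  -- first derivative of w(·,t)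
  have hfX : (fun z => w z t) = fun z => wδ (X z) := funext fun z => hwsol z t ht
  have hf' : ∀ z, HasDerivAt (fun z => w z t)
      (D (X z) * (1 + D (X z) * t)⁻¹) z := by
    intro z
    rw [hfX]
    exact (hwδ' (X z)).comp z (hX' z)
  set G : ℝ → ℝ := fun y => D y / (1 + D y * t) with hGdef
  have hderivf : deriv (fun z => w z t) = fun z => G (X z) := by
    funext z
    rw [(hf' z).deriv]
    simp only [hGdef]
    rw [div_eq_mul_inv]
  have hG' : ∀ y, HasDerivAt G (D2 y / (1 + D y * t) ^ 2) y := by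
    intro y
    have hden : HasDerivAt (fun y => 1 + D y * t) (D2 y * t) y :=
      ((hD' y).mul_const t).const_add 1
    have h5 := (hD' y).div hden (hP y).ne'
    refine h5.congr_deriv ?_
    have := hP y
    field_simp
    ring
  have hG2 : ∀ z, HasDerivAt (deriv (fun z => w z t))
      (D2 (X z) / (1 + D (X z) * t) ^ 2 * (1 + D (X z) * t)⁻¹) z := by
    intro z
    rw [hderivf]
    exact (hG' (X z)).comp z (hX' z)
  -- compute the second derivative
  have h2d : iteratedDeriv 2 (fun z => w z t) x
      = D2 (X x) / (1 + D (X x) * t) ^ 2 * (1 + D (X x) * t)⁻¹ := by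
    rw [iteratedDeriv_succ, iteratedDeriv_one]
    exact (hG2 x).deriv
  rw [h2d]
  have hder : deriv (fun z => w z t) x = G (X x) := by rw [hderivf]
  rw [hder]
  set y := X x with hydef
  set P := 1 + D y * t with hPdef
  have hP0 : 0 < P := hP y
  have hP1 : 1 ≤ P := by
    have := mul_nonneg (hDpos y).le ht; rw [hPdef]; linarith
  have habs : |D2 y / P ^ 2 * P⁻¹| = |D2 y| / (P ^ 2 * P) := by
    rw [abs_mul, abs_div, abs_inv, abs_of_pos (pow_pos hP0 2), abs_of_pos hP0,
      ← div_eq_mul_inv, div_div]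
  rw [habs]
  have hGx : G y = D y / P := rfl
  rw [hGx]
  calc |D2 y| / (P ^ 2 * P) ≤ (2 / δ * D y) / P := by
        apply div_le_div₀ (mul_nonneg (by positivity) (hDpos y).le) (hD2bound y) hP0
        nlinarith
    _ = 2 / δ * (D y / P) := by ring
    _ ≤ 4 / δ * (D y / P) :=
        mul_le_mul_of_nonneg_right ((div_le_div_iff_of_pos_right hδ).mpr (by norm_num))
          (div_nonneg (hDpos y).le hP0.le)
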